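/- If q₁ and q₂ are coprime natural numbers, then for all integers a, 𝒮(q₁·q₂, a) = 𝒮(q₁, a·q₂^{k−1}) · 𝒮(q₂, a·q₁^{k−1}), where 𝒮(q, a) = (1/q)·Σ_{d | q} ψ(d)·|W(d, a·(q/d)^{k−1})|. -/

import Mathlib

/-- The complete exponential sum `W(q,a) = Σ_{r=1, (r,q)=1}^q e(a·r^k/q)`,
with `e(z) = e^{2πiz}`. -/
noncomputable def expSumW (k q : ℕ) (a : ℤ) : ℂ :=
  ∑ r ∈ (Finset.Icc 1 q).filter (fun r => Nat.gcd r q = 1),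
    Complex.exp (2 * Real.pi * Complex.I * ((a : ℂ) * (r : ℂ) ^ k / (q : ℂ)))

/-- `𝒮(q, a) = (1/q)·Σ_{d | q} ψ(d)·|W(d, a·(q/d)^{k−1})|` with `ψ(d) = d/φ(d)`. -/
noncomputable def scriptS (k q : ℕ) (a : ℤ) : ℝ :=
  (1 / (q : ℝ)) * ∑ d ∈ q.divisors,
    ((d : ℝ) / (Nat.totient d : ℝ)) *
      ‖expSumW k d (a * ((q / d : ℕ) : ℤ) ^ (k - 1))‖

open Finset

/-- `e(a/q)`. -/
noncomputable def eFun (q : ℕ) (a : ℤ) : ℂ :=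
  Complex.exp (2 * Real.pi * Complex.I * ((a : ℂ) / (q : ℂ)))

lemma eFun_congr {q : ℕ} (hq : q ≠ 0) {a b : ℤ} (h : (q : ℤ) ∣ a - b) :
    eFun q a = eFun q b := by
  obtain ⟨m, hm⟩ := h
  have hq' : (q : ℂ) ≠ 0 := Nat.cast_ne_zero.mpr hq
  have ha : (a : ℂ) = (b : ℂ) + (q : ℂ) * (m : ℂ) := by
    have : a = b + (q : ℤ) * m := by linarith
    rw [this]; push_cast; ring
  have : eFun q a = eFun q b * Complex.exp ((m : ℂ) * (2 * Real.pi * Complex.I)) := by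
    unfold eFun
    rw [← Complex.exp_add]
    congr 1
    rw [ha]
    field_simp
  rw [this, Complex.exp_int_mul_two_pi_mul_I, mul_one]

lemma eFun_one (a : ℤ) : eFun 1 a = 1 := by
  have h := eFun_congr (q := 1) one_ne_zero (a := a) (b := 0) (by simp)
  rw [h]; unfold eFun; simp

lemma eFun_mul {q₁ q₂ : ℕ} (h₁ : q₁ ≠ 0) (h₂ : q₂ ≠ 0) (B C : ℤ) :
    eFun q₁ B * eFun q₂ C = eFun (q₁ * q₂) (B * q₂ + C * q₁) := by
  have h₁' : (q₁ : ℂ) ≠ 0 := Nat.cast_ne_zero.mpr h₁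
  have h₂' : (q₂ : ℂ) ≠ 0 := Nat.cast_ne_zero.mpr h₂
  unfold eFun
  rw [← Complex.exp_add]
  congr 1
  push_cast
  field_simp

lemma expSumW_eq (k q : ℕ) (a : ℤ) :
    expSumW k q a = ∑ r ∈ (Finset.Icc 1 q).filter (fun r => Nat.gcd r q = 1),
      eFun q (a * (r : ℤ) ^ k) := by
  unfold expSumW eFun
  refine Finset.sum_congr rfl fun r _ => ?_
  congr 1
  push_cast
  ring

lemma expSumW_eq_units (k q : ℕ) [NeZero q] (a : ℤ) :
    expSumW k q a = ∑ u : (ZMod q)ˣ, eFun q (a * (((u : ZMod q).val : ℤ)) ^ k) := by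
  rw [expSumW_eq]
  rcases eq_or_lt_of_le (Nat.one_le_iff_ne_zero.mpr (NeZero.ne q)) with h1 | h2
  · -- q = 1
    have hq : q = 1 := h1.symm
    subst hq
    have : ∀ b : ℤ, eFun 1 b = 1 := eFun_one
    simp only [this]
    rw [Finset.sum_const, Finset.sum_const]
    simp [ZMod.card_units_eq_totient]
  · haveI : Fact (1 < q) := ⟨h2⟩
    refine Finset.sum_nbij'
      (i := fun r => if h : Nat.gcd r q = 1 then ZMod.unitOfCoprime r h else 1)
      (j := fun u => (u : ZMod q).val) ?_ ?_ ?_ ?_ ?_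
    · intro r hr
      exact Finset.mem_univ _
    · intro u _
      simp only [Finset.mem_filter, Finset.mem_Icc]
      have hval : (u : ZMod q).val < q := ZMod.val_lt _
      have hne : (u : ZMod q).val ≠ 0 := by
        intro h0
        have : (u : ZMod q) = 0 := (ZMod.val_eq_zero _).mp h0
        exact Units.ne_zero u this
      exact ⟨⟨Nat.one_le_iff_ne_zero.mpr hne, hval.le⟩, ZMod.val_coe_unit_coprime u⟩
    · intro r hr
      simp only [Finset.mem_filter, Finset.mem_Icc] at hr
      obtain ⟨⟨hr1, hrq⟩, hg⟩ := hr
      have hrlt : r < q := by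
        rcases lt_or_eq_of_le hrq with h | h
        · exact h
        · exfalso; rw [h] at hg; rw [Nat.gcd_self] at hg; omega
      simp only [dif_pos hg]
      have : ((ZMod.unitOfCoprime r hg : (ZMod q)ˣ) : ZMod q) = (r : ZMod q) :=
        ZMod.coe_unitOfCoprime r hg
      rw [this, ZMod.val_natCast, Nat.mod_eq_of_lt hrlt]
    · intro u _
      have hc := ZMod.val_coe_unit_coprime u
      simp only [dif_pos hc]
      apply Units.ext
      rw [ZMod.coe_unitOfCoprime, ZMod.natCast_zmod_val]
    · intro r hr
      simp only [Finset.mem_filter, Finset.mem_Icc] at hr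
      obtain ⟨⟨hr1, hrq⟩, hg⟩ := hr
      have hrlt : r < q := by
        rcases lt_or_eq_of_le hrq with h | h
        · exact h
        · exfalso; rw [h] at hg; rw [Nat.gcd_self] at hg; omega
      simp only [dif_pos hg]
      congr 2
      rw [ZMod.coe_unitOfCoprime, ZMod.val_natCast, Nat.mod_eq_of_lt hrlt]

lemma crt_fst {m n : ℕ} (h : m.Coprime n) (z : ZMod (m * n)) :
    (ZMod.chineseRemainder h z).1 = ZMod.cast z := by
  have : ZMod.chineseRemainder h z
      = ZMod.castHom (show Nat.lcm m n ∣ m * n by simp [Nat.lcm_dvd_iff]) (ZMod m × ZMod n) z := rfl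
  rw [this, ZMod.castHom_apply, Prod.fst_zmod_cast]

lemma crt_snd {m n : ℕ} (h : m.Coprime n) (z : ZMod (m * n)) :
    (ZMod.chineseRemainder h z).2 = ZMod.cast z := by
  have : ZMod.chineseRemainder h z
      = ZMod.castHom (show Nat.lcm m n ∣ m * n by simp [Nat.lcm_dvd_iff]) (ZMod m × ZMod n) z := rfl
  rw [this, ZMod.castHom_apply, Prod.snd_zmod_cast]

lemma expSumW_mul (k : ℕ) (hk : k ≠ 0) {q₁ q₂ : ℕ} (h₁ : q₁ ≠ 0) (h₂ : q₂ ≠ 0)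
    (hco : Nat.Coprime q₁ q₂) (a : ℤ) :
    expSumW k (q₁ * q₂) a =
      expSumW k q₁ (a * (q₂ : ℤ) ^ (k - 1)) * expSumW k q₂ (a * (q₁ : ℤ) ^ (k - 1)) := by
  haveI : NeZero q₁ := ⟨h₁⟩
  haveI : NeZero q₂ := ⟨h₂⟩
  haveI : NeZero (q₁ * q₂) := ⟨mul_ne_zero h₁ h₂⟩
  rw [expSumW_eq_units, expSumW_eq_units, expSumW_eq_units, Finset.sum_mul_sum]
  set ψ := ZMod.chineseRemainder hco with hψdef
  set Φ : (ZMod (q₁ * q₂))ˣ ≃* (ZMod q₁)ˣ × (ZMod q₂)ˣ :=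
    (Units.mapEquiv ψ.toMulEquiv).trans MulEquiv.prodUnits with hΦdef
  set c₂ : (ZMod q₁)ˣ := ZMod.unitOfCoprime q₂ hco.symm with hc₂
  set c₁ : (ZMod q₂)ˣ := ZMod.unitOfCoprime q₁ hco with hc₁
  set e : (ZMod q₁)ˣ × (ZMod q₂)ˣ ≃ (ZMod (q₁ * q₂))ˣ :=
    ((Equiv.mulLeft c₂).prodCongr (Equiv.mulLeft c₁)).trans Φ.toEquiv.symm with he
  rw [← Equiv.sum_comp e (fun u => eFun (q₁ * q₂) (a * (((u : ZMod (q₁ * q₂)).val : ℤ)) ^ k)),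
    Fintype.sum_prod_type]
  refine Finset.sum_congr rfl fun x _ => Finset.sum_congr rfl fun y _ => ?_
  set u := e (x, y) with hu
  have hΦu : Φ u = (c₂ * x, c₁ * y) := by
    simp only [hu, he, Equiv.trans_apply, Equiv.prodCongr_apply, Prod.map_apply,
      Equiv.coe_mulLeft]
    exact Φ.toEquiv.apply_symm_apply _
  -- cast facts
  have hcast1 : (ZMod.cast (u : ZMod (q₁ * q₂)) : ZMod q₁) = (q₂ : ZMod q₁) * (x : ZMod q₁) := by
    have h' : ((Φ u).1 : ZMod q₁) = ((c₂ * x : (ZMod q₁)ˣ) : ZMod q₁) := by rw [hΦu]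
    have h'' : ((Φ u).1 : ZMod q₁) = (ψ (u : ZMod (q₁ * q₂))).1 := rfl
    rw [h'', crt_fst] at h'
    rw [h', Units.val_mul, hc₂, ZMod.coe_unitOfCoprime]
  have hcast2 : (ZMod.cast (u : ZMod (q₁ * q₂)) : ZMod q₂) = (q₁ : ZMod q₂) * (y : ZMod q₂) := by
    have h' : ((Φ u).2 : ZMod q₂) = ((c₁ * y : (ZMod q₂)ˣ) : ZMod q₂) := by rw [hΦu]
    have h'' : ((Φ u).2 : ZMod q₂) = (ψ (u : ZMod (q₁ * q₂))).2 := rfl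
    rw [h'', crt_snd] at h'
    rw [h', Units.val_mul, hc₁, ZMod.coe_unitOfCoprime]
  set R : ℕ := (u : ZMod (q₁ * q₂)).val with hR
  set X : ℕ := (x : ZMod q₁).val with hX
  set Y : ℕ := (y : ZMod q₂).val with hY
  have hR1 : ((R : ℕ) : ZMod q₁) = (q₂ : ZMod q₁) * ((X : ℕ) : ZMod q₁) := by
    rw [hR, ZMod.natCast_val, hcast1, hX, ZMod.natCast_zmod_val]
  have hR2 : ((R : ℕ) : ZMod q₂) = (q₁ : ZMod q₂) * ((Y : ℕ) : ZMod q₂) := by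
    rw [hR, ZMod.natCast_val, hcast2, hY, ZMod.natCast_zmod_val]
  have hdvd1 : (q₁ : ℤ) ∣ ((R : ℤ) ^ k - (q₂ : ℤ) ^ k * (X : ℤ) ^ k - (q₁ : ℤ) ^ k * (Y : ℤ) ^ k) := by
    have h0 : (((R : ℤ) ^ k - (q₂ : ℤ) ^ k * (X : ℤ) ^ k - (q₁ : ℤ) ^ k * (Y : ℤ) ^ k : ℤ) :
        ZMod q₁) = 0 := by
      push_cast
      rw [hR1, ZMod.natCast_self, zero_pow hk, mul_pow]
      ring
    exact_mod_cast (ZMod.intCast_zmod_eq_zero_iff_dvd _ q₁).mp h0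
  have hdvd2 : (q₂ : ℤ) ∣ ((R : ℤ) ^ k - (q₂ : ℤ) ^ k * (X : ℤ) ^ k - (q₁ : ℤ) ^ k * (Y : ℤ) ^ k) := by
    have h0 : (((R : ℤ) ^ k - (q₂ : ℤ) ^ k * (X : ℤ) ^ k - (q₁ : ℤ) ^ k * (Y : ℤ) ^ k : ℤ) :
        ZMod q₂) = 0 := by
      push_cast
      rw [hR2, ZMod.natCast_self, zero_pow hk, mul_pow]
      ring
    exact_mod_cast (ZMod.intCast_zmod_eq_zero_iff_dvd _ q₂).mp h0
  have hcoZ : IsCoprime (q₁ : ℤ) (q₂ : ℤ) := by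
    rw [Int.isCoprime_iff_gcd_eq_one, Int.gcd_natCast_natCast]
    exact hco
  have hdvdall : ((q₁ : ℤ) * (q₂ : ℤ)) ∣
      (a * (R : ℤ) ^ k -
        ((a * (q₂ : ℤ) ^ (k - 1) * (X : ℤ) ^ k) * q₂ + (a * (q₁ : ℤ) ^ (k - 1) * (Y : ℤ) ^ k) * q₁)) := by
    have hq2k : (q₂ : ℤ) ^ (k - 1) * (q₂ : ℤ) = (q₂ : ℤ) ^ k := by
      rw [← pow_succ]; congr 1; omega
    have hq1k : (q₁ : ℤ) ^ (k - 1) * (q₁ : ℤ) = (q₁ : ℤ) ^ k := by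
      rw [← pow_succ]; congr 1; omega
    have heq : a * (R : ℤ) ^ k -
        ((a * (q₂ : ℤ) ^ (k - 1) * (X : ℤ) ^ k) * q₂ + (a * (q₁ : ℤ) ^ (k - 1) * (Y : ℤ) ^ k) * q₁)
        = a * ((R : ℤ) ^ k - (q₂ : ℤ) ^ k * (X : ℤ) ^ k - (q₁ : ℤ) ^ k * (Y : ℤ) ^ k) := by
      rw [← hq2k, ← hq1k]; ring
    rw [heq]
    exact Dvd.dvd.mul_left (hcoZ.mul_dvd hdvd1 hdvd2) a
  calc eFun (q₁ * q₂) (a * (R : ℤ) ^ k)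
      = eFun (q₁ * q₂) ((a * (q₂ : ℤ) ^ (k - 1) * (X : ℤ) ^ k) * q₂
          + (a * (q₁ : ℤ) ^ (k - 1) * (Y : ℤ) ^ k) * q₁) := by
        refine eFun_congr (mul_ne_zero h₁ h₂) ?_
        have : ((q₁ * q₂ : ℕ) : ℤ) = (q₁ : ℤ) * (q₂ : ℤ) := by push_cast; ring
        rw [this]
        exact hdvdall
    _ = eFun q₁ (a * (q₂ : ℤ) ^ (k - 1) * (X : ℤ) ^ k)
          * eFun q₂ (a * (q₁ : ℤ) ^ (k - 1) * (Y : ℤ) ^ k) := (eFun_mul h₁ h₂ _ _).symm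
    _ = _ := by ring_nf

lemma sum_divisors_coprime {M : Type*} [AddCommMonoid M] {m n : ℕ} (h : m.Coprime n)
    (hm : m ≠ 0) (hn : n ≠ 0) (f : ℕ → M) :
    ∑ d ∈ (m * n).divisors, f d = ∑ p ∈ m.divisors ×ˢ n.divisors, f (p.1 * p.2) := by
  refine Finset.sum_nbij' (i := fun d => (Nat.gcd d m, Nat.gcd d n))
    (j := fun p => p.1 * p.2) ?_ ?_ ?_ ?_ ?_
  · intro d hd
    rw [Nat.mem_divisors] at hd
    rw [Finset.mem_product, Nat.mem_divisors, Nat.mem_divisors]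
    exact ⟨⟨Nat.gcd_dvd_right _ _, hm⟩, ⟨Nat.gcd_dvd_right _ _, hn⟩⟩
  · intro p hp
    rw [Finset.mem_product, Nat.mem_divisors, Nat.mem_divisors] at hp
    rw [Nat.mem_divisors]
    exact ⟨mul_dvd_mul hp.1.1 hp.2.1, mul_ne_zero hm hn⟩
  · intro d hd
    rw [Nat.mem_divisors] at hd
    exact (Nat.gcd_mul_gcd_eq_iff_dvd_mul_of_coprime h).mpr hd.1
  · intro p hp
    rw [Finset.mem_product, Nat.mem_divisors, Nat.mem_divisors] at hp
    obtain ⟨⟨h1, _⟩, ⟨h2, _⟩⟩ := hp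
    have hc12 : Nat.Coprime p.2 m := (Nat.Coprime.coprime_dvd_left h2 h.symm)
    have hc21 : Nat.Coprime p.1 n := (Nat.Coprime.coprime_dvd_left h1 h)
    have e1 : Nat.gcd (p.1 * p.2) m = p.1 := by
      rw [Nat.Coprime.gcd_mul_right_cancel p.1 hc12]
      exact Nat.gcd_eq_left h1
    have e2 : Nat.gcd (p.1 * p.2) n = p.2 := by
      rw [mul_comm, Nat.Coprime.gcd_mul_right_cancel p.2 hc21]
      exact Nat.gcd_eq_left h2
    exact Prod.ext e1 e2
  · intro d hd
    rw [Nat.mem_divisors] at hd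
    rw [(Nat.gcd_mul_gcd_eq_iff_dvd_mul_of_coprime h).mpr hd.1]

/-- If `q₁` and `q₂` are coprime natural numbers, then for all integers
`a`, `𝒮(q₁·q₂, a) = 𝒮(q₁, a·q₂^{k−1})·𝒮(q₂, a·q₁^{k−1})`. -/
theorem stmt13 (k : ℕ) (hk : 2 ≤ k) (q₁ q₂ : ℕ) (hq₁ : 0 < q₁) (hq₂ : 0 < q₂)
    (hco : Nat.Coprime q₁ q₂) (a : ℤ) :
    scriptS k (q₁ * q₂) a =
      scriptS k q₁ (a * (q₂ : ℤ) ^ (k - 1)) * scriptS k q₂ (a * (q₁ : ℤ) ^ (k - 1)) := by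
  have hk0 : k ≠ 0 := by omega
  unfold scriptS
  rw [sum_divisors_coprime hco hq₁.ne' hq₂.ne']
  have key : ∀ p ∈ q₁.divisors ×ˢ q₂.divisors,
      ((p.1 * p.2 : ℕ) : ℝ) / (Nat.totient (p.1 * p.2) : ℝ) *
        ‖expSumW k (p.1 * p.2) (a * ((q₁ * q₂ / (p.1 * p.2) : ℕ) : ℤ) ^ (k - 1))‖
      = (((p.1 : ℝ) / (Nat.totient p.1 : ℝ)) *
          ‖expSumW k p.1 ((a * (q₂ : ℤ) ^ (k - 1)) * ((q₁ / p.1 : ℕ) : ℤ) ^ (k - 1))‖)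
        * (((p.2 : ℝ) / (Nat.totient p.2 : ℝ)) *
          ‖expSumW k p.2 ((a * (q₁ : ℤ) ^ (k - 1)) * ((q₂ / p.2 : ℕ) : ℤ) ^ (k - 1))‖) := by
    rintro ⟨d₁, d₂⟩ hp
    rw [Finset.mem_product, Nat.mem_divisors, Nat.mem_divisors] at hp
    obtain ⟨⟨hd₁, _⟩, ⟨hd₂, _⟩⟩ := hp
    have hd₁0 : d₁ ≠ 0 := by
      rintro rfl; exact absurd (Nat.eq_zero_of_zero_dvd hd₁) hq₁.ne'
    have hd₂0 : d₂ ≠ 0 := by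
      rintro rfl; exact absurd (Nat.eq_zero_of_zero_dvd hd₂) hq₂.ne'
    have hcd : Nat.Coprime d₁ d₂ :=
      Nat.Coprime.coprime_dvd_left hd₁ (Nat.Coprime.coprime_dvd_right hd₂ hco)
    have hdiv : q₁ * q₂ / (d₁ * d₂) = (q₁ / d₁) * (q₂ / d₂) :=
      (Nat.div_mul_div_comm hd₁ hd₂).symm
    have hq₂' : ((q₂ / d₂ : ℕ) : ℤ) * (d₂ : ℤ) = (q₂ : ℤ) := by
      exact_mod_cast congrArg (fun x : ℕ => (x : ℤ)) (Nat.div_mul_cancel hd₂)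
    have hq₁' : ((q₁ / d₁ : ℕ) : ℤ) * (d₁ : ℤ) = (q₁ : ℤ) := by
      exact_mod_cast congrArg (fun x : ℕ => (x : ℤ)) (Nat.div_mul_cancel hd₁)
    have hW : expSumW k (d₁ * d₂) (a * ((q₁ * q₂ / (d₁ * d₂) : ℕ) : ℤ) ^ (k - 1))
        = expSumW k d₁ ((a * (q₂ : ℤ) ^ (k - 1)) * ((q₁ / d₁ : ℕ) : ℤ) ^ (k - 1))
          * expSumW k d₂ ((a * (q₁ : ℤ) ^ (k - 1)) * ((q₂ / d₂ : ℕ) : ℤ) ^ (k - 1)) := by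
      rw [hdiv, expSumW_mul k hk0 hd₁0 hd₂0 hcd]
      congr 1
      · congr 1
        rw [show (((q₁ / d₁) * (q₂ / d₂) : ℕ) : ℤ)
            = ((q₁ / d₁ : ℕ) : ℤ) * ((q₂ / d₂ : ℕ) : ℤ) from by push_cast; ring, ← hq₂']
        ring
      · congr 1
        rw [show (((q₁ / d₁) * (q₂ / d₂) : ℕ) : ℤ)
            = ((q₁ / d₁ : ℕ) : ℤ) * ((q₂ / d₂ : ℕ) : ℤ) from by push_cast; ring, ← hq₁']
        ring
    rw [hW, norm_mul, Nat.totient_mul hcd]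
    push_cast
    ring
  rw [Finset.sum_congr rfl key, Finset.sum_product]
  dsimp only
  rw [← Finset.sum_mul_sum]
  push_cast
  ring
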